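/- Let Ψ be a subroot system of the untwisted affine root system Φ. Then there exist a ℤ-linear function p : Gr(Ψ) → ℤ and nonnegative integers n_α (α ∈ Gr(Ψ)) such that Z_α(Ψ) = p(α) + n_α·ℤ for every α ∈ Gr(Ψ); in particular p(s_α(β)) = p(β) − ⟨β,α∨⟩·p(α) for all α, β ∈ Gr(Ψ). -/

import Mathlib

noncomputable section

variable {V : Type*} [NormedAddCommGroup V] [InnerProductSpace ℝ V]

/-- The Cartan pairing `⟨β, α∨⟩ = 2(β,α)/(α,α)`. -/
def cartanPair (α β : V) : ℝ := 2 * (inner ℝ β α : ℝ) / (inner ℝ α α : ℝ)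

/-- The reflection `s_α` on `V`: `s_α(β) = β - ⟨β,α∨⟩ α`. -/
def reflV (α β : V) : V := β - cartanPair α β • α

/-- The affine reflection `s_x` on `V × ℝ` with respect to the bilinear form
`B((x,a),(y,b)) = (x,y)`. -/
def reflA (x y : V × ℝ) : V × ℝ :=
  y - (2 * (inner ℝ y.1 x.1 : ℝ) / (inner ℝ x.1 x.1 : ℝ)) • x

/-- A finite irreducible reduced crystallographic root system in `V`. -/
structure IsIrreducibleRootSystem (R : Set V) : Prop where
  finite : R.Finite
  spans : Submodule.span ℝ R = ⊤
  zero_notMem : (0 : V) ∉ R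
  reduced : ∀ α ∈ R, ∀ c : ℝ, c • α ∈ R → c = 1 ∨ c = -1
  cartan_int : ∀ α ∈ R, ∀ β ∈ R, ∃ n : ℤ, cartanPair α β = (n : ℝ)
  refl_mem : ∀ α ∈ R, ∀ β ∈ R, reflV α β ∈ R
  irred : ∀ A B : Set V, R = A ∪ B → A.Nonempty → B.Nonempty →
    ∃ a ∈ A, ∃ b ∈ B, (inner ℝ a b : ℝ) ≠ 0

/-- A subroot system of a set `Φ` of affine roots: a nonempty proper subset stable
under the reflections `s_x`, `x ∈ Ψ`. -/
def IsSubrootSystem (Φ Ψ : Set (V × ℝ)) : Prop :=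
  Ψ.Nonempty ∧ Ψ ⊆ Φ ∧ Ψ ≠ Φ ∧ ∀ x ∈ Ψ, ∀ y ∈ Ψ, reflA x y ∈ Ψ

/-- `Ψ` is closed in `Φ`. -/
def IsClosedIn (Φ Ψ : Set (V × ℝ)) : Prop := ∀ x ∈ Ψ, ∀ y ∈ Ψ, x + y ∈ Φ → x + y ∈ Ψ

def IsClosedSubrootSystem (Φ Ψ : Set (V × ℝ)) : Prop :=
  IsSubrootSystem Φ Ψ ∧ IsClosedIn Φ Ψ

/-- A maximal closed subroot system of `Φ`: any closed subroot system of `Φ`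
containing it equals it. -/
def IsMaximalClosedSubrootSystem (Φ Ψ : Set (V × ℝ)) : Prop :=
  IsClosedSubrootSystem Φ Ψ ∧ ∀ Δ, IsClosedSubrootSystem Φ Δ → Ψ ⊆ Δ → Δ = Ψ

/-- A subroot system of a finite root system `R`. -/
def IsSubrootSystemF (R S : Set V) : Prop :=
  S.Nonempty ∧ S ⊆ R ∧ S ≠ R ∧ ∀ α ∈ S, ∀ β ∈ S, reflV α β ∈ S

/-- `S` is closed in the finite root system `R`. -/
def IsClosedInF (R S : Set V) : Prop := ∀ α ∈ S, ∀ β ∈ S, α + β ∈ R → α + β ∈ S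

def IsMaximalClosedSubrootSystemF (R S : Set V) : Prop :=
  (IsSubrootSystemF R S ∧ IsClosedInF R S) ∧
    ∀ T, IsSubrootSystemF R T → IsClosedInF R T → S ⊆ T → T = S

/-- A `ℤ`-linear function on `S`: the restriction to `S` of an additive group
homomorphism from the subgroup of `V` generated by `S` to `ℤ`. -/
def IsZLinearOn (S : Set V) (p : V → ℤ) : Prop :=
  ∃ f : AddSubgroup.closure S →+ ℤ,
    ∀ α, ∀ h : α ∈ S, p α = f ⟨α, AddSubgroup.subset_closure h⟩

/-- An irreducible subset: nonempty and not a union of two nonempty mutually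
orthogonal subsets. -/
def IsIrreducibleSubset (S : Set V) : Prop :=
  S.Nonempty ∧ ∀ A B : Set V, S = A ∪ B → A.Nonempty → B.Nonempty →
    ∃ a ∈ A, ∃ b ∈ B, (inner ℝ a b : ℝ) ≠ 0

/-- The untwisted affine root system attached to `R`. -/
def affineRS (R : Set V) : Set (V × ℝ) := {x | x.1 ∈ R ∧ ∃ r : ℤ, x.2 = (r : ℝ)}

/-- The gradient of a set of affine roots. -/
def Gr (Ψ : Set (V × ℝ)) : Set V := {α | ∃ r : ℤ, (α, (r : ℝ)) ∈ Ψ}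

/-- `Z_α(Ψ) = {r ∈ ℤ : α + rδ ∈ Ψ}`. -/
def ZSet (Ψ : Set (V × ℝ)) (α : V) : Set ℤ := {r | (α, (r : ℝ)) ∈ Ψ}

/-- The difference set `{r - r' : r, r' ∈ Z_α(Ψ)}`. -/
def DiffSet (Ψ : Set (V × ℝ)) (α : V) : Set ℤ :=
  {d | ∃ r ∈ ZSet Ψ α, ∃ r' ∈ ZSet Ψ α, d = r - r'}

/-- The lift `Ŝ = {α + rδ : α ∈ S, r ∈ ℤ}` of a subset `S` of the finite root system. -/
def liftF (S : Set V) : Set (V × ℝ) := {x | x.1 ∈ S ∧ ∃ r : ℤ, x.2 = (r : ℝ)}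

section AuxRoot

open RealInnerProductSpace Finset

variable {V : Type*} [NormedAddCommGroup V] [InnerProductSpace ℝ V]

private lemma inner_self_pos' {α : V} (h : α ≠ 0) : 0 < ⟪α, α⟫ :=
  lt_of_le_of_ne real_inner_self_nonneg (fun e => h (inner_self_eq_zero.mp e.symm))

private lemma cartanPair_self {α : V} (h : α ≠ 0) : cartanPair α α = 2 := by
  unfold cartanPair
  field_simp [ne_of_gt (inner_self_pos' h)]

private lemma cartanPair_neg_right (α β : V) : cartanPair α (-β) = - cartanPair α β := by
  unfold cartanPair
  rw [inner_neg_left]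
  ring

private lemma reflV_self {α : V} (h : α ≠ 0) : reflV α α = -α := by
  unfold reflV
  rw [cartanPair_self h, two_smul]
  abel

private lemma reflV_neg_right (α β : V) : reflV α (-β) = - reflV α β := by
  unfold reflV
  rw [cartanPair_neg_right, neg_smul]
  abel

private lemma reflV_neg_self {α : V} (h : α ≠ 0) : reflV α (-α) = α := by
  rw [reflV_neg_right, reflV_self h, neg_neg]

private lemma cartanPair_reflV_right {α : V} (h : α ≠ 0) (β : V) :
    cartanPair α (reflV α β) = - cartanPair α β := by
  have h0 : ⟪α, α⟫ ≠ 0 := ne_of_gt (inner_self_pos' h)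
  unfold reflV cartanPair
  rw [inner_sub_left, real_inner_smul_left]
  field_simp
  ring

private lemma reflV_reflV {α : V} (h : α ≠ 0) (β : V) : reflV α (reflV α β) = β := by
  have h1 := cartanPair_reflV_right h β
  show reflV α β - cartanPair α (reflV α β) • α = β
  rw [h1, neg_smul]
  show β - cartanPair α β • α - -(cartanPair α β • α) = β
  abel

private lemma arith_prog (A : Set ℤ) (hne : A.Nonempty)
    (hcl : ∀ a ∈ A, ∀ b ∈ A, 2 * a - b ∈ A) :
    ∃ m : ℕ, ∀ r ∈ A, A = {x : ℤ | ∃ k : ℤ, x = r + (m : ℤ) * k} := by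
  obtain ⟨a0, ha0⟩ := hne
  set D : Set ℤ := {d | a0 + d ∈ A} with hD
  have hD0 : (0 : ℤ) ∈ D := by simpa [hD] using ha0
  have hDneg : ∀ d ∈ D, -d ∈ D := by
    intro d hd
    have h1 := hcl a0 ha0 (a0 + d) hd
    have e : 2 * a0 - (a0 + d) = a0 + (-d) := by ring
    rw [e] at h1
    exact h1
  have hDadd2 : ∀ d ∈ D, ∀ e ∈ D, d + 2 * e ∈ D := by
    intro d hd e he
    have h1 : a0 + (-d) ∈ A := hDneg d hd
    have h2 := hcl (a0 + e) he (a0 + -d) h1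
    have e2 : 2 * (a0 + e) - (a0 + -d) = a0 + (d + 2 * e) := by ring
    rw [e2] at h2
    exact h2
  have hAiff : ∀ x : ℤ, x ∈ A ↔ x - a0 ∈ D := by
    intro x
    constructor
    · intro hx
      show a0 + (x - a0) ∈ A
      have e : a0 + (x - a0) = x := by ring
      rw [e]; exact hx
    · intro hx
      have : a0 + (x - a0) ∈ A := hx
      have e : a0 + (x - a0) = x := by ring
      rwa [e] at this
  have claim : ∃ m : ℕ, D = {x : ℤ | ∃ k : ℤ, x = (m : ℤ) * k} := by
    by_cases hpos : ∃ d ∈ D, 0 < d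
    · obtain ⟨d0, hd0, hd0pos⟩ := hpos
      set NS : Set ℕ := {n : ℕ | 0 < n ∧ (n : ℤ) ∈ D} with hNS
      have hNSne : NS.Nonempty := by
        refine ⟨d0.toNat, ?_, ?_⟩
        · omega
        · rwa [Int.toNat_of_nonneg (le_of_lt hd0pos)]
      have hgmem := Nat.sInf_mem hNSne
      set g : ℕ := sInf NS with hgdef
      have hgpos : 0 < g := hgmem.1
      have hgD : (g : ℤ) ∈ D := hgmem.2
      have hgmin : ∀ n : ℕ, 0 < n → (n : ℤ) ∈ D → g ≤ n := fun n h1 h2 => Nat.sInf_le ⟨h1, h2⟩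
      have hnat : ∀ n : ℕ, (g : ℤ) * n ∈ D := by
        intro n
        induction n using Nat.strong_induction_on with
        | _ n ih =>
          match n with
          | 0 => simpa using hD0
          | 1 => simpa using hgD
          | (k + 2) =>
            have h1 := hDadd2 _ (ih k (by omega)) _ hgD
            have e : (g : ℤ) * k + 2 * g = (g : ℤ) * (k + 2) := by push_cast; ring
            rwa [e] at h1
      have hmul : ∀ k : ℤ, (g : ℤ) * k ∈ D := by
        intro k
        obtain ⟨n, rfl | rfl⟩ := k.eq_nat_or_neg
        · exact hnat n
        · have := hDneg _ (hnat n)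
          have e : -((g : ℤ) * n) = (g : ℤ) * (-(n : ℤ)) := by ring
          rwa [e] at this
      have hdvd : ∀ d ∈ D, (g : ℤ) ∣ d := by
        intro d hd
        have hg0 : (0 : ℤ) < 2 * g := by positivity
        obtain ⟨q, x, hde, hq, hx⟩ :
            ∃ q x : ℤ, 2 * (g : ℤ) * q + x = d ∧ q = d / (2 * g) ∧ x = d % (2 * g) :=
          ⟨d / (2 * g), d % (2 * g), Int.mul_ediv_add_emod d (2 * g), rfl, rfl⟩
        have hx0 : 0 ≤ x := hx ▸ Int.emod_nonneg d (by omega)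
        have hxlt : x < 2 * g := hx ▸ Int.emod_lt_of_pos d hg0
        have hxD : x ∈ D := by
          have h1 := hDadd2 d hd _ (hmul (-q))
          have e : d + 2 * ((g : ℤ) * (-q)) = x := by linarith
          rwa [e] at h1
        have hxg : x = 0 ∨ x = g := by
          by_contra hcon
          push_neg at hcon
          obtain ⟨hx1, hx2⟩ := hcon
          rcases lt_or_gt_of_ne hx2 with hlt | hgt
          · have hxmem : (x.toNat : ℤ) ∈ D := by rwa [Int.toNat_of_nonneg hx0]
            have := hgmin x.toNat (by omega) hxmem
            omega
          · have hyD : -x + 2 * (g : ℤ) ∈ D := hDadd2 _ (hDneg x hxD) _ hgD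
            have hy0 : 0 ≤ -x + 2 * (g : ℤ) := by omega
            have hymem : (((-x + 2 * (g : ℤ)).toNat : ℤ)) ∈ D := by
              rwa [Int.toNat_of_nonneg hy0]
            have := hgmin _ (by omega) hymem
            omega
        rcases hxg with rfl | rfl
        · exact ⟨2 * q, by linarith⟩
        · exact ⟨2 * q + 1, by linarith⟩
      refine ⟨g, Set.ext fun x => ?_⟩
      constructor
      · intro hx
        obtain ⟨k, hk⟩ := hdvd x hx
        exact ⟨k, hk⟩
      · rintro ⟨k, rfl⟩
        exact hmul k
    · push_neg at hpos
      refine ⟨0, Set.ext fun x => ?_⟩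
      constructor
      · intro hx
        refine ⟨0, ?_⟩
        have h1 := hpos x hx
        have h2 := hpos (-x) (hDneg x hx)
        omega
      · rintro ⟨k, rfl⟩
        simpa using hD0
  obtain ⟨m, hm⟩ := claim
  refine ⟨m, fun r hr => Set.ext fun x => ?_⟩
  have hrD : r - a0 ∈ D := (hAiff r).mp hr
  rw [hm] at hrD
  obtain ⟨k0, hk0⟩ := hrD
  constructor
  · intro hx
    have hxD := (hAiff x).mp hx
    rw [hm] at hxD
    obtain ⟨k, hk⟩ := hxD
    exact ⟨k - k0, by push_cast; linarith⟩
  · rintro ⟨k, rfl⟩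
    apply (hAiff _).mpr
    rw [hm]
    exact ⟨k0 + k, by push_cast; linarith⟩

private lemma exists_generic (S : Set V) (hfin : S.Finite) :
    (∀ α ∈ S, α ≠ 0) → ∃ v : V, ∀ α ∈ S, ⟪α, v⟫ ≠ 0 := by
  refine Set.Finite.induction_on
    (motive := fun s _ => (∀ α ∈ s, α ≠ 0) → ∃ v : V, ∀ α ∈ s, ⟪α, v⟫ ≠ 0) S hfin
    (fun _ => ⟨0, by simp⟩) ?_
  intro a s ha hs ih h0
  · 
    obtain ⟨v, hv⟩ := ih (fun α hα => h0 α (Set.mem_insert_of_mem _ hα))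
    have ha0 : a ≠ 0 := h0 a (Set.mem_insert _ _)
    have haa := inner_self_pos' ha0
    set bad : Set ℝ :=
      insert (-⟪a, v⟫ / ⟪a, a⟫) ((fun β => -⟪β, v⟫ / ⟪β, a⟫) '' s) with hbad
    have hbadfin : bad.Finite := ((hs.image _).insert _)
    obtain ⟨t, ht⟩ := hbadfin.infinite_compl.nonempty
    refine ⟨v + t • a, ?_⟩
    intro α hα
    rw [inner_add_right, real_inner_smul_right]
    rcases Set.mem_insert_iff.mp hα with rfl | hαs
    · intro he
      apply ht
      left
      field_simp
      linarith
    · by_cases hba : ⟪α, a⟫ = 0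
      · rw [hba, mul_zero, add_zero]
        exact hv α hαs
      · intro he
        apply ht
        right
        refine ⟨α, hαs, ?_⟩
        field_simp
        linarith

end AuxRoot


section AuxRoot2

open RealInnerProductSpace Finset

variable {V : Type*} [NormedAddCommGroup V] [InnerProductSpace ℝ V]

private lemma sub_mem_root (S : Set V) (h0 : (0 : V) ∉ S)
    (hred : ∀ α ∈ S, ∀ c : ℝ, c • α ∈ S → c = 1 ∨ c = -1)
    (hcart : ∀ α ∈ S, ∀ β ∈ S, ∃ n : ℤ, cartanPair α β = (n : ℝ))
    (hrefl : ∀ α ∈ S, ∀ β ∈ S, reflV α β ∈ S)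
    {α β : V} (hα : α ∈ S) (hβ : β ∈ S) (hne : α ≠ β) (hip : 0 < ⟪α, β⟫) :
    α - β ∈ S := by
  have hα0 : α ≠ 0 := fun h => h0 (h ▸ hα)
  have hβ0 : β ≠ 0 := fun h => h0 (h ▸ hβ)
  have haa := inner_self_pos' hα0
  have hbb := inner_self_pos' hβ0
  obtain ⟨n, hn⟩ := hcart α hα β hβ
  obtain ⟨m, hm⟩ := hcart β hβ α hα
  have hn' : (n : ℝ) = 2 * ⟪α, β⟫ / ⟪α, α⟫ := by
    rw [← hn]; unfold cartanPair; rw [real_inner_comm]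
  have hm' : (m : ℝ) = 2 * ⟪α, β⟫ / ⟪β, β⟫ := by
    rw [← hm]; unfold cartanPair; rfl
  have hnpos : 0 < n := by
    have : (0 : ℝ) < (n : ℝ) := by rw [hn']; positivity
    exact_mod_cast this
  have hmpos : 0 < m := by
    have : (0 : ℝ) < (m : ℝ) := by rw [hm']; positivity
    exact_mod_cast this
  by_cases hn1 : n = 1
  · -- reflV α β = β - α ∈ S, then negate
    have h1 : reflV α β = β - α := by
      unfold reflV; rw [hn, hn1]; push_cast; rw [one_smul]
    have h2 : β - α ∈ S := h1 ▸ hrefl α hα β hβ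
    have h3 : β - α ≠ 0 := fun h => h0 (h ▸ h2)
    have h4 := reflV_self h3 ▸ hrefl _ h2 _ h2
    rwa [neg_sub] at h4
  by_cases hm1 : m = 1
  · have h1 : reflV β α = α - β := by
      unfold reflV
      rw [hm, hm1]; push_cast; rw [one_smul]
    exact h1 ▸ hrefl β hβ α hα
  -- else n, m ≥ 2 : contradiction
  exfalso
  have hn2 : 2 ≤ n := by omega
  have hm2 : 2 ≤ m := by omega
  have hCS := real_inner_mul_inner_self_le α β
  have hprod : (n : ℝ) * (m : ℝ) * (⟪α, α⟫ * ⟪β, β⟫) = 4 * (⟪α, β⟫ * ⟪α, β⟫) := by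
    rw [hn', hm']; field_simp; ring
  have hle4 : (n : ℝ) * (m : ℝ) ≤ 4 := by
    rw [← mul_le_mul_iff_of_pos_right (mul_pos haa hbb), hprod]
    nlinarith [hCS]
  have hnm4 : n * m = 4 := by
    have h1 : (4 : ℝ) ≤ (n : ℝ) * (m : ℝ) := by
      have : (2 : ℝ) ≤ (n : ℝ) := by exact_mod_cast hn2
      have h' : (2 : ℝ) ≤ (m : ℝ) := by exact_mod_cast hm2
      nlinarith
    have h2 : ((n * m : ℤ) : ℝ) = 4 := by push_cast; linarith
    exact_mod_cast h2
  have hn2' : n = 2 := by nlinarith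
  have hm2' : m = 2 := by nlinarith
  have e1 : ⟪α, β⟫ = ⟪α, α⟫ := by
    have := hn'; rw [hn2'] at this; push_cast at this
    field_simp at this; linarith
  have e2 : ⟪α, β⟫ = ⟪β, β⟫ := by
    have := hm'; rw [hm2'] at this; push_cast at this
    field_simp at this; linarith
  have hz : ⟪α - β, α - β⟫ ≤ 0 := by
    rw [inner_sub_sub_self]
    rw [real_inner_comm α β]
    linarith
  exact hne (sub_eq_zero.mp (real_inner_self_nonpos.mp hz))

end AuxRoot2


section AuxRoot3

open RealInnerProductSpace Finset

variable {V : Type*} [NormedAddCommGroup V] [InnerProductSpace ℝ V]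

private theorem key_lemma (S : Set V) (Z : V → Set ℤ)
    (hfin : S.Finite) (h0 : (0 : V) ∉ S)
    (hred : ∀ α ∈ S, ∀ c : ℝ, c • α ∈ S → c = 1 ∨ c = -1)
    (hcart : ∀ α ∈ S, ∀ β ∈ S, ∃ n : ℤ, cartanPair α β = (n : ℝ))
    (hZne : ∀ α ∈ S, (Z α).Nonempty)
    (hZR : ∀ α ∈ S, ∀ β ∈ S, ∀ n : ℤ, cartanPair α β = (n : ℝ) →
      ∀ r ∈ Z α, ∀ s ∈ Z β, reflV α β ∈ S ∧ s - n * r ∈ Z (reflV α β)) :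
    ∃ p : V → ℤ, IsZLinearOn S p ∧ (∀ α ∈ S, p α ∈ Z α) ∧
      (∀ α ∈ S, ∀ a ∈ Z α, ∀ b ∈ Z α, 2 * a - b ∈ Z α) ∧
      ∀ α ∈ S, ∀ β ∈ S, (p (reflV α β) : ℝ) = (p β : ℝ) - cartanPair α β * (p α : ℝ) := by
  classical
  have hne0 : ∀ α ∈ S, α ≠ 0 := fun α hα h => h0 (h ▸ hα)
  have hrefl : ∀ α ∈ S, ∀ β ∈ S, reflV α β ∈ S := by
    intro α hα β hβ
    obtain ⟨n, hn⟩ := hcart α hα β hβ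
    obtain ⟨r, hr⟩ := hZne α hα
    obtain ⟨s, hs⟩ := hZne β hβ
    exact (hZR α hα β hβ n hn r hr s hs).1
  have hnegS : ∀ α ∈ S, -α ∈ S := fun α hα =>
    reflV_self (hne0 α hα) ▸ hrefl α hα α hα
  have hZneg : ∀ α ∈ S, ∀ a ∈ Z α, -a ∈ Z (-α) := by
    intro α hα a ha
    have h2 : cartanPair α α = ((2 : ℤ) : ℝ) := by
      rw [cartanPair_self (hne0 α hα)]; norm_num
    have h3 := (hZR α hα α hα 2 h2 a ha a ha).2
    rw [reflV_self (hne0 α hα)] at h3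
    have e : a - 2 * a = -a := by ring
    rwa [e] at h3
  have hstring : ∀ α ∈ S, ∀ a ∈ Z α, ∀ b ∈ Z α, 2 * a - b ∈ Z α := by
    intro α hα a ha b hb
    have hcnn : cartanPair α (-α) = ((-2 : ℤ) : ℝ) := by
      rw [cartanPair_neg_right, cartanPair_self (hne0 α hα)]; norm_num
    have h3 := (hZR α hα (-α) (hnegS α hα) (-2) hcnn a ha (-b) (hZneg α hα b hb)).2
    rw [reflV_neg_self (hne0 α hα)] at h3
    have e : -b - (-2) * a = 2 * a - b := by ring
    rwa [e] at h3
  -- generic vector and positive system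
  obtain ⟨v, hv⟩ := exists_generic S hfin hne0
  set f0 : V → ℝ := fun x => ⟪x, v⟫ with hf0
  have hf0add : ∀ x y, f0 (x + y) = f0 x + f0 y := fun x y => inner_add_left x y v
  set Pos : Set V := {α ∈ S | 0 < f0 α} with hPosdef
  have hPosS : Pos ⊆ S := fun α hα => hα.1
  have hPfin : Pos.Finite := hfin.subset hPosS
  have hdich : ∀ α ∈ S, α ∈ Pos ∨ -α ∈ Pos := by
    intro α hα
    rcases lt_or_gt_of_ne (hv α hα) with h | h
    · right
      refine ⟨hnegS α hα, ?_⟩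
      show 0 < ⟪-α, v⟫
      rw [inner_neg_left]
      linarith
    · left; exact ⟨hα, h⟩
  set Δ : Set V := {α ∈ Pos | ¬∃ β ∈ Pos, ∃ γ ∈ Pos, α = β + γ} with hΔdef
  have hΔfin : Δ.Finite := hPfin.subset fun α hα => hα.1
  set D : Finset V := hΔfin.toFinset with hDdef
  have hDΔ : ∀ β ∈ D, β ∈ Δ := fun β hβ => hΔfin.mem_toFinset.mp hβ
  have hΔD : ∀ β ∈ Δ, β ∈ D := fun β hβ => hΔfin.mem_toFinset.mpr hβ
  have hDP : ∀ β ∈ D, β ∈ Pos := fun β hβ => (hDΔ β hβ).1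
  have hDS : ∀ β ∈ D, β ∈ S := fun β hβ => hPosS (hDP β hβ)
  -- measure for induction
  set μ : V → ℕ := fun α => {β ∈ Pos | f0 β < f0 α}.ncard with hμdef
  have hμlt : ∀ α : V, ∀ β ∈ Pos, f0 β < f0 α → μ β < μ α := by
    intro α β hβ hfb
    apply Set.ncard_lt_ncard
    · rw [Set.ssubset_def]
      constructor
      · intro γ hγ; exact ⟨hγ.1, hγ.2.trans hfb⟩
      · intro hsub
        exact absurd (hsub ⟨hβ, hfb⟩).2 (lt_irrefl _)
    · exact hPfin.subset fun γ hγ => hγ.1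
  -- decomposition into simples
  have hdecomp : ∀ α ∈ Pos, ∃ c : V → ℕ, α = ∑ β ∈ D, (c β : ℝ) • β := by
    suffices h : ∀ N : ℕ, ∀ α ∈ Pos, μ α < N → ∃ c : V → ℕ, α = ∑ β ∈ D, (c β : ℝ) • β by
      exact fun α hα => h (μ α + 1) α hα (Nat.lt_succ_self _)
    intro N
    induction N with
    | zero => exact fun α hα h => absurd h (Nat.not_lt_zero _)
    | succ N ih =>
      intro α hα hm
      by_cases hαΔ : α ∈ Δ
      · refine ⟨fun x => if x = α then 1 else 0, ?_⟩
        have h1 : ∀ β, ((if β = α then (1 : ℕ) else 0 : ℕ) : ℝ) • β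
            = if β = α then β else 0 := by
          intro β; split <;> simp
        rw [Finset.sum_congr rfl fun β _ => h1 β, Finset.sum_ite_eq' D α fun β => β,
          if_pos (hΔD α hαΔ)]
      · have hdec : ∃ β ∈ Pos, ∃ γ ∈ Pos, α = β + γ := by
          by_contra h; exact hαΔ ⟨hα, h⟩
        obtain ⟨β, hβ, γ, hγ, rfl⟩ := hdec
        have hfβ : f0 β < f0 (β + γ) := by rw [hf0add]; linarith [hγ.2]
        have hfγ : f0 γ < f0 (β + γ) := by rw [hf0add]; linarith [hβ.2]
        obtain ⟨cb, hcb⟩ := ih β hβ (by have := hμlt (β + γ) β hβ hfβ; omega)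
        obtain ⟨cg, hcg⟩ := ih γ hγ (by have := hμlt (β + γ) γ hγ hfγ; omega)
        refine ⟨fun x => cb x + cg x, ?_⟩
        calc β + γ = (∑ x ∈ D, (cb x : ℝ) • x) + ∑ x ∈ D, (cg x : ℝ) • x := by
              rw [← hcb, ← hcg]
          _ = ∑ x ∈ D, ((cb x + cg x : ℕ) : ℝ) • x := by
              rw [← Finset.sum_add_distrib]
              refine Finset.sum_congr rfl fun x _ => ?_
              push_cast
              rw [add_smul]
  -- simple roots are pairwise obtuse
  have hobtuse : ∀ β ∈ D, ∀ γ ∈ D, β ≠ γ → ⟪β, γ⟫ ≤ 0 := by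
    intro β hβ γ hγ hne
    by_contra h
    push_neg at h
    have hsub := sub_mem_root S h0 hred hcart hrefl (hDS β hβ) (hDS γ hγ) hne h
    rcases hdich _ hsub with hp | hp
    · exact (hDΔ β hβ).2 ⟨β - γ, hp, γ, hDP γ hγ, by abel⟩
    · rw [neg_sub] at hp
      exact (hDΔ γ hγ).2 ⟨γ - β, hp, β, hDP β hβ, by abel⟩
  -- linear independence of simples
  have hhalf : ∀ c : V → ℝ, ∑ β ∈ D, c β • β = 0 → ∀ β ∈ D, c β ≤ 0 := by
    intro c hsum
    set Dp : Finset V := D.filter fun β => 0 < c β with hDp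
    set Dn : Finset V := D.filter (fun β => ¬0 < c β) with hDn
    set t : V := ∑ β ∈ Dp, c β • β with ht
    have hsplit : t + ∑ β ∈ Dn, c β • β = 0 := by
      rw [ht, hDp, hDn, Finset.sum_filter_add_sum_filter_not]
      exact hsum
    have htu : t = ∑ β ∈ Dn, -c β • β := by
      have h1 : ∑ β ∈ Dn, -c β • β = -∑ β ∈ Dn, c β • β := by
        rw [← Finset.sum_neg_distrib]
        exact Finset.sum_congr rfl fun β _ => by rw [neg_smul]
      rw [h1]
      exact eq_neg_of_add_eq_zero_left hsplit
    have htt : ⟪t, t⟫ ≤ 0 := by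
      conv_lhs => rw [show (⟪t, t⟫ : ℝ) = ⟪t, ∑ β ∈ Dn, -c β • β⟫ by rw [← htu]]
      rw [inner_sum]
      apply Finset.sum_nonpos
      intro γ hγ
      rw [real_inner_smul_right]
      have htγ : ⟪t, γ⟫ ≤ 0 := by
        rw [ht, sum_inner]
        apply Finset.sum_nonpos
        intro β hβ
        rw [real_inner_smul_left]
        have hβD := Finset.mem_filter.mp hβ
        have hγD := Finset.mem_filter.mp hγ
        have hβγ : β ≠ γ := by
          intro h
          rw [h] at hβD
          exact hγD.2 hβD.2
        exact mul_nonpos_of_nonneg_of_nonpos (le_of_lt hβD.2)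
          (hobtuse β hβD.1 γ hγD.1 hβγ)
      have hγn : 0 ≤ -c γ := by
        have := (Finset.mem_filter.mp hγ).2
        push_neg at this
        linarith
      exact mul_nonpos_of_nonneg_of_nonpos hγn htγ
    have ht0 : t = 0 := real_inner_self_nonpos.mp htt
    have hft : ∑ β ∈ Dp, c β * f0 β = 0 := by
      have h1 : f0 t = 0 := by rw [ht0]; exact inner_zero_left v
      rw [ht] at h1
      rw [← h1]
      rw [show f0 (∑ β ∈ Dp, c β • β) = ⟪∑ β ∈ Dp, c β • β, v⟫ from rfl, sum_inner]
      exact Finset.sum_congr rfl fun β _ => by rw [real_inner_smul_left]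
    have hDpe : Dp = ∅ := by
      by_contra hne
      have hpos : 0 < ∑ β ∈ Dp, c β * f0 β := by
        apply Finset.sum_pos
        · intro β hβ
          have hβD := Finset.mem_filter.mp hβ
          exact mul_pos hβD.2 (hDP β hβD.1).2
        · exact Finset.nonempty_of_ne_empty hne
      linarith
    intro β hβ
    by_contra h
    push_neg at h
    have : β ∈ Dp := Finset.mem_filter.mpr ⟨hβ, h⟩
    rw [hDpe] at this
    exact absurd this (Finset.notMem_empty β)
  have hind : ∀ c : V → ℝ, ∑ β ∈ D, c β • β = 0 → ∀ β ∈ D, c β = 0 := by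
    intro c hsum β hβ
    have h1 := hhalf c hsum β hβ
    have h2 := hhalf (fun x => -c x) (by
      have : ∑ β ∈ D, -c β • β = -∑ β ∈ D, c β • β := by
        rw [← Finset.sum_neg_distrib]
        exact Finset.sum_congr rfl fun x _ => by rw [neg_smul]
      rw [this, hsum, neg_zero]) β hβ
    linarith
  -- linear independence, packaged
  have hliD : LinearIndependent ℝ (fun i : {x // x ∈ D} => (i : V)) := by
    rw [Fintype.linearIndependent_iff]
    intro g hg i
    set c : V → ℝ := fun x => if h : x ∈ D then g ⟨x, h⟩ else 0 with hc
    have hce : ∀ j : {x // x ∈ D}, c ↑j = g j := by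
      intro j
      simp only [hc]
      rw [dif_pos j.2]
    have hsum : ∑ β ∈ D, c β • β = 0 := by
      rw [Finset.sum_subtype D (fun x => Iff.rfl) fun β => c β • β]
      have e : ∑ a : {x // x ∈ D}, c ↑a • (↑a : V)
          = ∑ a : {x // x ∈ D}, g a • (↑a : V) :=
        Finset.sum_congr rfl fun j _ => by rw [hce j]
      rw [e]
      exact hg
    have := hind c hsum ↑i i.2
    rwa [hce i] at this
  have hli : LinearIndependent ℝ ((↑) : (↑D : Set V) → V) := by
    refine (linearIndependent_equiv'
      (Equiv.subtypeEquivRight fun x => Finset.mem_coe.symm) ?_).mp hliD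
    funext j
    rfl
  have hDsub : ∀ {x : V}, x ∈ D → x ∈ (linearIndependent_subtype_iff.mp hli).extend (Set.subset_univ (↑D : Set V)) :=
    fun hx => (linearIndependent_subtype_iff.mp hli).subset_extend _ (Finset.mem_coe.mpr hx)
  set B := Module.Basis.extend (linearIndependent_subtype_iff.mp hli) with hBdef
  -- choose representatives
  have hrex : ∀ β : V, ∃ k : ℤ, β ∈ D → k ∈ Z β := by
    intro β
    by_cases h : β ∈ D
    · obtain ⟨k, hk⟩ := hZne β (hDS β h)
      exact ⟨k, fun _ => hk⟩
    · exact ⟨0, fun h' => absurd h' h⟩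
  choose r hr using hrex
  set P : V →ₗ[ℝ] ℝ := ∑ i ∈ D.attach, (r i.1 : ℝ) • B.coord ⟨i.1, hDsub i.2⟩ with hPdef
  have hPapp : ∀ x : V,
      P x = ∑ i ∈ D.attach, (r i.1 : ℝ) * (B.coord ⟨i.1, hDsub i.2⟩) x := by
    intro x
    rw [hPdef, LinearMap.coe_sum, Finset.sum_apply]
    exact Finset.sum_congr rfl fun i _ => by rw [LinearMap.smul_apply, smul_eq_mul]
  have hPD : ∀ γ ∈ D, P γ = (r γ : ℝ) := by
    intro γ hγ
    rw [hPapp]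
    have hcoord : ∀ i : {x // x ∈ D},
        (B.coord ⟨i.1, hDsub i.2⟩) γ
          = if (⟨γ, hDsub hγ⟩ : {y : V // y ∈ (linearIndependent_subtype_iff.mp hli).extend (Set.subset_univ (↑D : Set V))})
              = ⟨i.1, hDsub i.2⟩ then 1 else 0 := by
      intro i
      rw [Module.Basis.coord_apply]
      conv_lhs =>
        rw [show γ = B ⟨γ, hDsub hγ⟩ from (Module.Basis.extend_apply_self (linearIndependent_subtype_iff.mp hli) ⟨γ, hDsub hγ⟩).symm]
      rw [Module.Basis.repr_self, Finsupp.single_apply]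
    rw [Finset.sum_congr rfl fun i _ => by rw [hcoord i]]
    refine (Finset.sum_eq_single (⟨γ, hγ⟩ : {x // x ∈ D}) ?_ ?_).trans ?_
    · intro i _ hne
      rw [if_neg, mul_zero]
      intro h
      exact hne (Subtype.ext (congrArg Subtype.val h).symm)
    · intro h
      exact absurd (Finset.mem_attach D _) h
    · rw [if_pos rfl, mul_one]
  have hPpos : ∀ α ∈ Pos, ∃ k : ℤ, P α = (k : ℝ) := by
    intro α hα
    obtain ⟨c, hc⟩ := hdecomp α hα
    refine ⟨∑ β ∈ D, (c β : ℤ) * r β, ?_⟩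
    rw [hc, map_sum]
    push_cast
    refine Finset.sum_congr rfl fun β hβ => ?_
    rw [map_smul, smul_eq_mul, hPD β hβ]
  have hPint : ∀ α ∈ S, ∃ k : ℤ, P α = (k : ℝ) := by
    intro α hα
    rcases hdich α hα with h | h
    · exact hPpos α h
    · obtain ⟨k, hk⟩ := hPpos (-α) h
      refine ⟨-k, ?_⟩
      have hneg : P (-α) = -P α := map_neg P α
      push_cast
      linarith [hk, hneg]
  set p : V → ℤ := fun x => ⌊P x⌋ with hpdef
  have hpS : ∀ α ∈ S, (p α : ℝ) = P α := by
    intro α hα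
    obtain ⟨k, hk⟩ := hPint α hα
    simp only [hpdef]
    rw [hk, Int.floor_intCast]
  -- the main induction: p α ∈ Z α for α in Pos
  have hmemPos : ∀ α ∈ Pos, p α ∈ Z α := by
    suffices h : ∀ N : ℕ, ∀ α ∈ Pos, μ α < N → p α ∈ Z α by
      exact fun α hα => h (μ α + 1) α hα (Nat.lt_succ_self _)
    intro N
    induction N with
    | zero => exact fun α hα h => absurd h (Nat.not_lt_zero _)
    | succ N ih =>
      intro α hα hm
      have hαS : α ∈ S := hPosS hα
      have hα0 : α ≠ 0 := hne0 α hαS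
      by_cases hαΔ : α ∈ Δ
      · have h1 : P α = (r α : ℝ) := hPD α (hΔD α hαΔ)
        have h2 : (p α : ℝ) = (r α : ℝ) := by rw [hpS α hαS, h1]
        have h3 : p α = r α := by exact_mod_cast h2
        rw [h3]
        exact hr α (hΔD α hαΔ)
      · obtain ⟨c, hc⟩ := hdecomp α hα
        have hexγ : ∃ γ ∈ D, 0 < ⟪α, γ⟫ := by
          by_contra hno
          push_neg at hno
          have hle : ⟪α, α⟫ ≤ 0 := by
            conv_lhs => rw [show (⟪α, α⟫ : ℝ) = ⟪α, ∑ β ∈ D, (c β : ℝ) • β⟫ by rw [← hc]]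
            rw [inner_sum]
            apply Finset.sum_nonpos
            intro β hβ
            rw [real_inner_smul_right]
            exact mul_nonpos_of_nonneg_of_nonpos (by positivity) (hno β hβ)
          exact absurd hle (not_le.mpr (inner_self_pos' hα0))
        obtain ⟨γ, hγD, hγip⟩ := hexγ
        have hγS := hDS γ hγD
        have hγP := hDP γ hγD
        have hγ0 := hne0 γ hγS
        have hγγ := inner_self_pos' hγ0
        obtain ⟨n, hn⟩ := hcart γ hγS α hαS
        have hnpos : 0 < n := by
          have h1 : (0 : ℝ) < (n : ℝ) := by
            rw [← hn]
            unfold cartanPair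
            positivity
          exact_mod_cast h1
        have hβ'S : reflV γ α ∈ S := hrefl γ hγS α hαS
        have hβ'eq : reflV γ α = α - (n : ℝ) • γ := by
          unfold reflV
          rw [hn]
        have hαeq : α = reflV γ α + (n : ℝ) • γ := by rw [hβ'eq]; abel
        have hf0γ : 0 < f0 γ := hγP.2
        have hf0β' : f0 (reflV γ α) < f0 α := by
          have e1 : f0 α = f0 (reflV γ α) + (n : ℝ) * f0 γ := by
            conv_lhs => rw [hαeq]
            rw [hf0add]
            have : f0 ((n : ℝ) • γ) = (n : ℝ) * f0 γ := real_inner_smul_left γ v (n : ℝ)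
            rw [this]
          have h2 : 0 < (n : ℝ) * f0 γ := by
            apply mul_pos _ hf0γ
            exact_mod_cast hnpos
          linarith
        have hβ'P : reflV γ α ∈ Pos := by
          rcases hdich _ hβ'S with h | h
          · exact h
          · exfalso
            obtain ⟨d, hd⟩ := hdecomp _ h
            have hzero :
                ∑ β ∈ D, (((c β : ℝ) + (d β : ℝ)) - if β = γ then (n : ℝ) else 0) • β = 0 := by
              have e1 : ∑ β ∈ D, (if β = γ then (n : ℝ) else 0) • β = (n : ℝ) • γ := by
                have e2 : ∀ β, (if β = γ then (n : ℝ) else 0) • β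
                    = if β = γ then (n : ℝ) • β else 0 := by
                  intro β; split <;> simp
                rw [Finset.sum_congr rfl fun β _ => e2 β,
                  Finset.sum_ite_eq' D γ fun β => (n : ℝ) • β, if_pos hγD]
              have e3 : ∀ β ∈ D, (((c β : ℝ) + (d β : ℝ)) - if β = γ then (n : ℝ) else 0) • β
                  = ((c β : ℝ) • β + (d β : ℝ) • β) - (if β = γ then (n : ℝ) else 0) • β := by
                intro β _
                rw [sub_smul, add_smul]
              rw [Finset.sum_congr rfl e3, Finset.sum_sub_distrib, Finset.sum_add_distrib, e1,
                ← hc, ← hd, hβ'eq]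
              abel
            have hall := hind _ hzero
            have hcd : ∀ β ∈ D, β ≠ γ → c β = 0 := by
              intro β hβ hneγ
              have h1 := hall β hβ
              rw [if_neg hneγ, sub_zero] at h1
              have h2 : (0 : ℝ) ≤ (c β : ℝ) := Nat.cast_nonneg _
              have h3 : (0 : ℝ) ≤ (d β : ℝ) := Nat.cast_nonneg _
              have h4 : (c β : ℝ) = 0 := by linarith
              exact_mod_cast h4
            have hαγ : α = (c γ : ℝ) • γ := by
              rw [hc]
              rw [Finset.sum_eq_single γ]
              · intro β hβ hne
                rw [hcd β hβ hne]
                simp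
              · intro hno
                exact absurd hγD hno
            rcases hred γ hγS (c γ : ℝ) (by rw [← hαγ]; exact hαS) with h1 | h1
            · apply hαΔ
              rw [hαγ, h1, one_smul]
              exact hDΔ γ hγD
            · have h2 : (0 : ℝ) ≤ (c γ : ℝ) := Nat.cast_nonneg _
              rw [h1] at h2
              norm_num at h2
        have hμβ' : μ (reflV γ α) < N := by
          have := hμlt α (reflV γ α) hβ'P hf0β'
          omega
        have hpβ' := ih (reflV γ α) hβ'P hμβ'
        have hmm : cartanPair γ (reflV γ α) = ((-n : ℤ) : ℝ) := by
          rw [cartanPair_reflV_right hγ0, hn]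
          push_cast
          ring
        have hZmem := (hZR γ hγS (reflV γ α) hβ'S (-n) hmm (r γ) (hr γ hγD)
          (p (reflV γ α)) hpβ').2
        rw [reflV_reflV hγ0] at hZmem
        have hpα : p α = p (reflV γ α) - (-n) * r γ := by
          have h1 : (p α : ℝ) = P α := hpS α hαS
          have h2 : (p (reflV γ α) : ℝ) = P (reflV γ α) := hpS _ hβ'S
          have h3 : P α = P (reflV γ α) + (n : ℝ) * P γ := by
            conv_lhs => rw [hαeq]
            rw [map_add, map_smul, smul_eq_mul]
          have h4 : P γ = (r γ : ℝ) := hPD γ hγD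
          have h5 : (p α : ℝ) = ((p (reflV γ α) - (-n) * r γ : ℤ) : ℝ) := by
            rw [h1, h3, ← h2, h4]
            push_cast
            ring
          exact_mod_cast h5
        rw [hpα]
        exact hZmem
  have hmemS : ∀ α ∈ S, p α ∈ Z α := by
    intro α hα
    rcases hdich α hα with h | h
    · exact hmemPos α h
    · have h1 := hmemPos (-α) h
      have h2 := hZneg (-α) (hnegS α hα) (p (-α)) h1
      rw [neg_neg] at h2
      have h3 : p α = -p (-α) := by
        have ha : (p α : ℝ) = P α := hpS α hα
        have hb : (p (-α) : ℝ) = P (-α) := hpS (-α) (hnegS α hα)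
        have hc : P (-α) = -P α := map_neg P α
        have hd : (p α : ℝ) = ((-p (-α) : ℤ) : ℝ) := by
          rw [ha]
          push_cast
          linarith [hb, hc]
        exact_mod_cast hd
      rw [h3]
      exact h2
  -- ℤ-linearity
  have hclo : ∀ x ∈ AddSubgroup.closure S, ∃ k : ℤ, P x = (k : ℝ) := by
    intro x hx
    refine AddSubgroup.closure_induction ?_ ?_ ?_ ?_ hx
    · exact fun y hy => hPint y hy
    · exact ⟨0, by simp⟩
    · rintro y z _ _ ⟨k, hk⟩ ⟨l, hl⟩
      exact ⟨k + l, by rw [map_add, hk, hl]; push_cast; ring⟩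
    · rintro y _ ⟨k, hk⟩
      exact ⟨-k, by rw [map_neg, hk]; push_cast; ring⟩
  have hadd : ∀ a b : AddSubgroup.closure S,
      (fun x : AddSubgroup.closure S => ⌊P ↑x⌋) (a + b)
        = (fun x : AddSubgroup.closure S => ⌊P ↑x⌋) a
          + (fun x : AddSubgroup.closure S => ⌊P ↑x⌋) b := by
    intro a b
    obtain ⟨k, hk⟩ := hclo ↑a a.2
    obtain ⟨l, hl⟩ := hclo ↑b b.2
    have h1 : P ↑(a + b) = ((k + l : ℤ) : ℝ) := by
      have h2 : ((a + b : AddSubgroup.closure S) : V) = (↑a + ↑b : V) := rfl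
      rw [h2, map_add, hk, hl]
      push_cast
      ring
    simp only []
    rw [h1, hk, hl, Int.floor_intCast, Int.floor_intCast, Int.floor_intCast]
  refine ⟨p, ⟨AddMonoidHom.mk' (fun x : AddSubgroup.closure S => ⌊P ↑x⌋) hadd,
      fun α h => by simp only [hpdef]; rfl⟩, hmemS, hstring, ?_⟩
  · intro α hα β hβ
    obtain ⟨n, hn⟩ := hcart α hα β hβ
    have h1 : reflV α β ∈ S := hrefl α hα β hβ
    have e : reflV α β = β - (n : ℝ) • α := by
      unfold reflV
      rw [hn]
    rw [hpS _ h1, hpS β hβ, hpS α hα, e, map_sub, map_smul, smul_eq_mul, hn]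

end AuxRoot3


/-- For a subroot system `Ψ` of the untwisted affine root system `Φ`
there are a `ℤ`-linear `p : Gr(Ψ) → ℤ` and nonnegative integers `n_α` with
`Z_α(Ψ) = p(α) + n_α·ℤ` for all `α ∈ Gr(Ψ)`; in particular
`p(s_α(β)) = p(β) − ⟨β,α∨⟩·p(α)` for all `α, β ∈ Gr(Ψ)`. -/
theorem statement0
    {V : Type*} [NormedAddCommGroup V] [InnerProductSpace ℝ V] [FiniteDimensional ℝ V]
    (R : Set V) (hR : IsIrreducibleRootSystem R)
    (Ψ : Set (V × ℝ)) (hΨ : IsSubrootSystem (affineRS R) Ψ) :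
    ∃ (p : V → ℤ) (n : V → ℕ), IsZLinearOn (Gr Ψ) p ∧
      (∀ α ∈ Gr Ψ, ZSet Ψ α = {r : ℤ | ∃ k : ℤ, r = p α + (n α : ℤ) * k}) ∧
      ∀ α ∈ Gr Ψ, ∀ β ∈ Gr Ψ,
        (p (reflV α β) : ℝ) = (p β : ℝ) - cartanPair α β * (p α : ℝ) := by
  classical
  obtain ⟨hΨne, hΨsub, hΨne', hΨrefl⟩ := hΨ
  have hGrR : Gr Ψ ⊆ R := by
    rintro α ⟨r, hr⟩
    exact (hΨsub hr).1
  have hfin : (Gr Ψ).Finite := hR.finite.subset hGrR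
  have h0 : (0 : V) ∉ Gr Ψ := fun h => hR.zero_notMem (hGrR h)
  have hred : ∀ α ∈ Gr Ψ, ∀ c : ℝ, c • α ∈ Gr Ψ → c = 1 ∨ c = -1 :=
    fun α hα c hc => hR.reduced α (hGrR hα) c (hGrR hc)
  have hcart : ∀ α ∈ Gr Ψ, ∀ β ∈ Gr Ψ, ∃ n : ℤ, cartanPair α β = (n : ℝ) :=
    fun α hα β hβ => hR.cartan_int α (hGrR hα) β (hGrR hβ)
  have hZne : ∀ α ∈ Gr Ψ, (ZSet Ψ α).Nonempty := by
    rintro α ⟨r, hr⟩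
    exact ⟨r, hr⟩
  have hZR : ∀ α ∈ Gr Ψ, ∀ β ∈ Gr Ψ, ∀ n : ℤ, cartanPair α β = (n : ℝ) →
      ∀ r ∈ ZSet Ψ α, ∀ s ∈ ZSet Ψ β,
        reflV α β ∈ Gr Ψ ∧ s - n * r ∈ ZSet Ψ (reflV α β) := by
    intro α hα β hβ n hn r hr s hs
    have h := hΨrefl (α, (r : ℝ)) hr (β, (s : ℝ)) hs
    have he : reflA (α, (r : ℝ)) (β, (s : ℝ)) = (reflV α β, ((s - n * r : ℤ) : ℝ)) := by
      show ((β, (s : ℝ)) - (2 * (inner ℝ β α : ℝ) / (inner ℝ α α : ℝ)) • (α, (r : ℝ)))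
        = (reflV α β, ((s - n * r : ℤ) : ℝ))
      have hcp : (2 * (inner ℝ β α : ℝ) / (inner ℝ α α : ℝ)) = cartanPair α β := rfl
      rw [hcp, hn]
      refine Prod.ext ?_ ?_
      · show β - (n : ℝ) • α = reflV α β
        unfold reflV
        rw [hn]
      · show (s : ℝ) - (n : ℝ) * (r : ℝ) = ((s - n * r : ℤ) : ℝ)
        push_cast
        ring
    rw [he] at h
    exact ⟨⟨s - n * r, h⟩, h⟩
  obtain ⟨p, hlin, hmem, hstring, hid⟩ :=
    key_lemma (Gr Ψ) (ZSet Ψ) hfin h0 hred hcart hZne hZR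
  have hprog : ∀ α ∈ Gr Ψ, ∃ m : ℕ,
      ZSet Ψ α = {x : ℤ | ∃ k : ℤ, x = p α + (m : ℤ) * k} := by
    intro α hα
    obtain ⟨m, hm⟩ := arith_prog (ZSet Ψ α) (hZne α hα) (hstring α hα)
    exact ⟨m, hm (p α) (hmem α hα)⟩
  set n : V → ℕ := fun α =>
    if h : ∃ m : ℕ, ZSet Ψ α = {x : ℤ | ∃ k : ℤ, x = p α + (m : ℤ) * k}
      then h.choose else 0 with hndef
  refine ⟨p, n, hlin, ?_, hid⟩
  intro α hα
  have h := hprog α hα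
  have hn : n α = h.choose := by
    simp only [hndef]
    rw [dif_pos h]
  rw [hn]
  exact h.choose_spec
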